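/- Let W₁, …, Wated_l ⊂ ℝ^{p,q} (p,q ≥ 2, l ≥ 2) be pairwise distinct nonempty open sets, each of intersection type (a translate of U_S, a translate of U_T, or a degenerate half-space H_{v,α} with v isotropic nonzero). Then the union W₁ ∪ ⋯ ∪ W_l is disconnected if and only if either (1) there exist an isotropic vector v ≠ 0, reals α₁ > ⋯ > α_{k₀} ≥ α_{k₀+1} > ⋯ > α_l and 1 ≤ k₀ ≤ l-1 such that, up to permutation, W_i = H_{v,α_i} for i ≤ k₀ and W_i = H_{-v,-α_i} for i > k₀, or (2) l = 2 and, up to permutation, W₁ = v + U_S and W₂ = v + U_T for some v ∈ ℝⁿ. -/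

import Mathlib

/-- The standard symmetric bilinear form of signature `(p,q)` on `ℝⁿ`, `n = p + q`. -/
noncomputable def formB (p q : ℕ) (v w : Fin (p + q) → ℝ) : ℝ :=
  ∑ i : Fin (p + q), (if (i : ℕ) < p then -(v i * w i) else v i * w i)

/-- An open set of *intersection type*: a translate of `U_S = {q > 0}`, a translate of
`U_T = {q < 0}`, or a degenerate half-space `H_{v,α}` with `v` isotropic nonzero. -/
def InterType (p q : ℕ) (U : Set (Fin (p + q) → ℝ)) : Prop :=
  (∃ v, U = {w | formB p q (w - v) (w - v) > 0}) ∨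
  (∃ v, U = {w | formB p q (w - v) (w - v) < 0}) ∨
  (∃ v α, v ≠ 0 ∧ formB p q v v = 0 ∧ U = {w | formB p q v w > α})

namespace Cls
variable {p q : ℕ}

lemma formB_comm (v w : Fin (p+q) → ℝ) : formB p q v w = formB p q w v := by
  unfold formB; congr 1; ext i; split <;> ring

lemma formB_add_left (u v w : Fin (p+q) → ℝ) :
    formB p q (u + v) w = formB p q u w + formB p q v w := by
  unfold formB; rw [← Finset.sum_add_distrib]; congr 1; ext i
  simp only [Pi.add_apply]; split <;> ring

lemma formB_smul_left (c : ℝ) (v w : Fin (p+q) → ℝ) :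
    formB p q (c • v) w = c * formB p q v w := by
  unfold formB; rw [Finset.mul_sum]; congr 1; ext i
  simp only [Pi.smul_apply, smul_eq_mul]; split <;> ring

lemma formB_neg_left (v w : Fin (p+q) → ℝ) : formB p q (-v) w = -formB p q v w := by
  have := formB_smul_left (p := p) (q := q) (-1) v w
  simpa using this

lemma formB_add_right (u v w : Fin (p+q) → ℝ) :
    formB p q u (v + w) = formB p q u v + formB p q u w := by
  rw [formB_comm, formB_add_left, formB_comm v u, formB_comm w u]

lemma formB_smul_right (c : ℝ) (v w : Fin (p+q) → ℝ) :
    formB p q v (c • w) = c * formB p q v w := by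
  rw [formB_comm, formB_smul_left, formB_comm]

lemma formB_sub_left (u v w : Fin (p+q) → ℝ) :
    formB p q (u - v) w = formB p q u w - formB p q v w := by
  have : u - v = u + (-1 : ℝ) • v := by ext i; simp; ring
  rw [this, formB_add_left, formB_smul_left]; ring

lemma formB_sub_right (u v w : Fin (p+q) → ℝ) :
    formB p q u (v - w) = formB p q u v - formB p q u w := by
  rw [formB_comm, formB_sub_left, formB_comm v u, formB_comm w u]

lemma formB_single (v : Fin (p+q) → ℝ) (j : Fin (p+q)) (c : ℝ) :
    formB p q v (Pi.single j c) = (if (j:ℕ) < p then -(v j * c) else v j * c) := by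
  unfold formB
  rw [Finset.sum_eq_single j]
  · simp
  · intro i _ hij; simp [Pi.single_eq_of_ne hij]
  · simp

/-- surjectivity of `formB v ·` for `v ≠ 0`. -/
lemma formB_surj (v : Fin (p+q) → ℝ) (hv : v ≠ 0) (a : ℝ) :
    ∃ x, formB p q v x = a := by
  obtain ⟨j, hj⟩ : ∃ j, v j ≠ 0 := by
    by_contra h; push_neg at h; exact hv (funext h)
  by_cases hjp : (j:ℕ) < p
  · exact ⟨Pi.single j (-(a / v j)), by rw [formB_single]; simp [hjp]; field_simp⟩
  · exact ⟨Pi.single j (a / v j), by rw [formB_single]; simp [hjp]; field_simp⟩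

/-- dual injectivity -/
lemma eq_zero_of_formB_eq_zero (v : Fin (p+q) → ℝ) (h : ∀ x, formB p q v x = 0) :
    v = 0 := by
  ext j
  have := h (Pi.single j 1)
  rw [formB_single] at this
  split at this <;> simpa using this


/-! ### quadratic and linear helpers -/

lemma quad_eventually_pos (a b c : ℝ) (ha : 0 < a) :
    ∃ t0 : ℝ, 1 ≤ t0 ∧ ∀ t ≥ t0, a*t^2 + 2*b*t + c > 0 := by
  refine ⟨max 1 ((|2*b| + |c| + 1)/a), le_max_left _ _, fun t ht => ?_⟩
  have h1 : (1:ℝ) ≤ t := le_trans (le_max_left _ _) ht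
  have h2 : (|2*b| + |c| + 1)/a ≤ t := le_trans (le_max_right _ _) ht
  have h3 : |2*b| + |c| + 1 ≤ a * t := by
    rw [div_le_iff₀ ha] at h2; linarith [h2]
  nlinarith [le_abs_self (2*b), neg_abs_le (2*b), le_abs_self c, neg_abs_le c,
    abs_nonneg (2*b), abs_nonneg c]

lemma linear_hits (m c a : ℝ) (hm : m ≠ 0) : ∃ t, c + t*m = a :=
  ⟨(a - c)/m, by field_simp; ring⟩

lemma formB_expand (u e : Fin (p+q) → ℝ) (t : ℝ) :
    formB p q (u + t • e) (u + t • e) =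
      formB p q u u + 2*t*(formB p q u e) + t^2 * formB p q e e := by
  rw [formB_add_left, formB_add_right, formB_add_right, formB_smul_left,
    formB_smul_right, formB_smul_left, formB_smul_right, formB_comm e u]
  ring

/-! ### basic vectors -/

lemma formB_single_single (i j : Fin (p+q)) (c d : ℝ) :
    formB p q (Pi.single i c) (Pi.single j d) =
      if i = j then (if (i:ℕ) < p then -(c*d) else c*d) else 0 := by
  rw [formB_comm, formB_single]
  by_cases h : i = j
  · subst h; simp [mul_comm]
  · simp [h, Ne.symm h, Pi.single_eq_of_ne h]

lemma sq_single (j : Fin (p+q)) (hj : p ≤ (j:ℕ)) (c : ℝ) :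
    formB p q (Pi.single j c) (Pi.single j c) = c*c := by
  rw [formB_single_single]; simp [Nat.not_lt.mpr hj]

lemma sq_single_neg (j : Fin (p+q)) (hj : (j:ℕ) < p) (c : ℝ) :
    formB p q (Pi.single j c) (Pi.single j c) = -(c*c) := by
  rw [formB_single_single]; simp [hj]

/-- a vector perpendicular to `z` with positive square, needs `2 ≤ q`. -/
lemma exists_perp_pos (hq : 2 ≤ q) (z : Fin (p+q) → ℝ) :
    ∃ e, formB p q z e = 0 ∧ formB p q e e > 0 := by
  have hA : p < p + q := by omega
  have hB : p + 1 < p + q := by omega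
  set A : Fin (p+q) := ⟨p, hA⟩
  set B : Fin (p+q) := ⟨p+1, hB⟩
  have hAB : A ≠ B := by simp [A, B, Fin.ext_iff]
  have hAv : ((A:Fin (p+q)):ℕ) = p := rfl
  by_cases hz : z A = 0 ∧ z B = 0
  · refine ⟨Pi.single A 1, ?_, ?_⟩
    · rw [formB_single]; simp [hAv, hz.1]
    · rw [sq_single A (le_refl p) 1]; norm_num
  · refine ⟨Pi.single A (z B) + Pi.single B (-(z A)), ?_, ?_⟩
    · rw [formB_add_right, formB_single, formB_single]
      simp only [hAv]
      have : ¬ ((B:ℕ) < p) := by simp [B]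
      simp [this]; ring
    · rw [formB_add_left, formB_add_right, formB_add_right,
        sq_single A (le_refl p) (z B), sq_single B (Nat.le_succ p) (-(z A)),
        formB_single_single, formB_single_single]
      simp only [hAB, Ne.symm hAB, if_false]
      have : z B * z B + z A * z A > 0 := by
        rcases not_and_or.mp hz with h | h
        · nlinarith [mul_self_pos.mpr h, mul_self_nonneg (z B)]
        · nlinarith [mul_self_pos.mpr h, mul_self_nonneg (z A)]
      linarith

/-- a vector perpendicular to `z` with negative square, needs `2 ≤ p`. -/
lemma exists_perp_neg (hp : 2 ≤ p) (z : Fin (p+q) → ℝ) :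
    ∃ e, formB p q z e = 0 ∧ formB p q e e < 0 := by
  have hA : 0 < p + q := by omega
  have hB : 1 < p + q := by omega
  set A : Fin (p+q) := ⟨0, hA⟩
  set B : Fin (p+q) := ⟨1, hB⟩
  have hAB : A ≠ B := by simp [A, B, Fin.ext_iff]
  have hAp : ((A:Fin (p+q)):ℕ) < p := by simp [A]; omega
  have hBp : ((B:Fin (p+q)):ℕ) < p := by simp [B]; omega
  by_cases hz : z A = 0 ∧ z B = 0
  · refine ⟨Pi.single A 1, ?_, ?_⟩
    · rw [formB_single]; simp [hAp, hz.1]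
    · rw [sq_single_neg A hAp 1]; norm_num
  · refine ⟨Pi.single A (z B) + Pi.single B (-(z A)), ?_, ?_⟩
    · rw [formB_add_right, formB_single, formB_single]
      simp [hAp, hBp]; ring
    · rw [formB_add_left, formB_add_right, formB_add_right,
        sq_single_neg A hAp (z B), sq_single_neg B hBp (-(z A)),
        formB_single_single, formB_single_single]
      simp only [hAB, Ne.symm hAB, if_false]
      have : z B * z B + z A * z A > 0 := by
        rcases not_and_or.mp hz with h | h
        · nlinarith [mul_self_pos.mpr h, mul_self_nonneg (z B)]
        · nlinarith [mul_self_pos.mpr h, mul_self_nonneg (z A)]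
      linarith

/-- an isotropic vector not orthogonal to a given `u ≠ 0`; needs `1 ≤ p`, `1 ≤ q`. -/
lemma exists_isotropic_not_perp (hp : 1 ≤ p) (hq : 1 ≤ q)
    (u : Fin (p+q) → ℝ) (hu : u ≠ 0) :
    ∃ z, formB p q z z = 0 ∧ formB p q z u ≠ 0 := by
  obtain ⟨j, hj⟩ : ∃ j, u j ≠ 0 := by
    by_contra h; push_neg at h; exact hu (funext h)
  have hP : p < p + q := by omega
  have h0 : 0 < p + q := by omega
  by_cases hjp : (j:ℕ) < p
  · set B : Fin (p+q) := ⟨p, hP⟩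
    have hBp : ¬ ((B:ℕ) < p) := by simp [B]
    have hjB : j ≠ B := by intro h; rw [h] at hjp; exact hBp hjp
    -- z = single j 1 ± single B 1
    have hiso : ∀ s : ℝ, formB p q (Pi.single j 1 + Pi.single B s)
        (Pi.single j 1 + Pi.single B s) = -1 + s*s := by
      intro s
      rw [formB_add_left, formB_add_right, formB_add_right,
        sq_single_neg j hjp 1, sq_single B (by simp [B]) s,
        formB_single_single, formB_single_single]
      simp [hjB, Ne.symm hjB]
    have hval : ∀ s : ℝ, formB p q (Pi.single j 1 + Pi.single B s) u
        = -(u j) + s * (u B) := by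
      intro s
      rw [formB_add_left, formB_comm, formB_single, formB_comm, formB_single]
      simp [hjp, hBp]; ring
    by_cases hc : -(u j) + u B = 0
    · refine ⟨Pi.single j 1 + Pi.single B (-1), ?_, ?_⟩
      · rw [hiso]; ring
      · rw [hval]; intro h; apply hj; linarith [hc, h]
    · exact ⟨Pi.single j 1 + Pi.single B 1, by rw [hiso]; ring, by rw [hval]; simpa using hc⟩
  · set B : Fin (p+q) := ⟨0, h0⟩
    have hBp : ((B:ℕ) < p) := by simp [B]; omega
    have hjB : j ≠ B := by intro h; rw [h] at hjp; exact hjp hBp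
    have hiso : ∀ s : ℝ, formB p q (Pi.single B 1 + Pi.single j s)
        (Pi.single B 1 + Pi.single j s) = -1 + s*s := by
      intro s
      rw [formB_add_left, formB_add_right, formB_add_right,
        sq_single_neg B hBp 1, sq_single j (by omega) s,
        formB_single_single, formB_single_single]
      simp [hjB, Ne.symm hjB]
    have hval : ∀ s : ℝ, formB p q (Pi.single B 1 + Pi.single j s) u
        = -(u B) + s * (u j) := by
      intro s
      rw [formB_add_left, formB_comm, formB_single, formB_comm, formB_single]
      simp [hjp, hBp]; ring
    by_cases hc : -(u B) + u j = 0
    · refine ⟨Pi.single B 1 + Pi.single j (-1), ?_, ?_⟩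
      · rw [hiso]; ring
      · rw [hval]; intro h; apply hj; linarith [hc, h]
    · exact ⟨Pi.single B 1 + Pi.single j 1, by rw [hiso]; ring, by rw [hval]; simpa using hc⟩

/-! ### intersection lemmas -/

/-- two translates of `U_S` always meet (needs `1 ≤ q`). -/
lemma meet_SS (hq : 1 ≤ q) (v w : Fin (p+q) → ℝ) :
    ∃ x, formB p q (x - v) (x - v) > 0 ∧ formB p q (x - w) (x - w) > 0 := by
  have hP : p < p + q := by omega
  set e : Fin (p+q) → ℝ := Pi.single ⟨p, hP⟩ 1 with he
  have hee : formB p q e e = 1 := by rw [he, sq_single _ (le_refl p) 1]; norm_num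
  obtain ⟨t0, ht01, ht0⟩ := quad_eventually_pos 1 (formB p q (v - w) e) (formB p q (v-w) (v-w))
    one_pos
  refine ⟨v + t0 • e, ?_, ?_⟩
  · have : v + t0 • e - v = (0 : Fin (p+q) → ℝ) + t0 • e := by ext i; simp
    rw [this, formB_expand]
    have h0 : formB p q (0 : Fin (p+q) → ℝ) (0 : Fin (p+q) → ℝ) = 0 := by
      have := formB_smul_left (p := p) (q := q) 0 0 0; simpa using this
    have h0e : formB p q (0 : Fin (p+q) → ℝ) e = 0 := by
      have := formB_smul_left (p := p) (q := q) 0 0 e; simpa using this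
    rw [h0, h0e, hee]; nlinarith
  · have : v + t0 • e - w = (v - w) + t0 • e := by ext i; simp; ring
    rw [this, formB_expand, hee]
    have := ht0 t0 (le_refl _)
    nlinarith

/-- two translates of `U_T` always meet (needs `1 ≤ p`). -/
lemma meet_TT (hp : 1 ≤ p) (v w : Fin (p+q) → ℝ) :
    ∃ x, formB p q (x - v) (x - v) < 0 ∧ formB p q (x - w) (x - w) < 0 := by
  have h0 : 0 < p + q := by omega
  set e : Fin (p+q) → ℝ := Pi.single ⟨0, h0⟩ 1 with he
  have hee : formB p q e e = -1 := by
    rw [he, sq_single_neg _ (show (0:ℕ) < p by omega) 1]; norm_num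
  obtain ⟨t0, ht01, ht0⟩ := quad_eventually_pos 1 (-(formB p q (v - w) e))
    (-(formB p q (v-w) (v-w))) one_pos
  refine ⟨v + t0 • e, ?_, ?_⟩
  · have : v + t0 • e - v = (0 : Fin (p+q) → ℝ) + t0 • e := by ext i; simp
    rw [this, formB_expand]
    have h00 : formB p q (0 : Fin (p+q) → ℝ) (0 : Fin (p+q) → ℝ) = 0 := by
      have := formB_smul_left (p := p) (q := q) 0 0 0; simpa using this
    have h0e : formB p q (0 : Fin (p+q) → ℝ) e = 0 := by
      have := formB_smul_left (p := p) (q := q) 0 0 e; simpa using this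
    rw [h00, h0e, hee]; nlinarith
  · have : v + t0 • e - w = (v - w) + t0 • e := by ext i; simp; ring
    rw [this, formB_expand, hee]
    have := ht0 t0 (le_refl _)
    nlinarith

lemma formB_zero_left (w : Fin (p+q) → ℝ) : formB p q 0 w = 0 := by
  have := formB_smul_left (p := p) (q := q) 0 0 w; simpa using this

/-- a translate of `U_S` meets a translate of `U_T` when centers differ
(needs `2 ≤ p`, `1 ≤ q`). -/
lemma meet_ST (hp : 2 ≤ p) (hq : 1 ≤ q) (v w : Fin (p+q) → ℝ) (hvw : v ≠ w) :
    ∃ x, formB p q (x - v) (x - v) > 0 ∧ formB p q (x - w) (x - w) < 0 := by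
  set u : Fin (p+q) → ℝ := v - w with hu
  have hu0 : u ≠ 0 := sub_ne_zero_of_ne hvw
  obtain ⟨z, hziso, hzu⟩ := exists_isotropic_not_perp (by omega) hq u hu0
  obtain ⟨e, hze, hee⟩ := exists_perp_neg hp z
  -- y = e + t • z ; q y = q e < 0 ; q (y - u) linear in t with slope -2 b z u
  have hyq : ∀ t : ℝ, formB p q (e + t • z) (e + t • z) = formB p q e e := by
    intro t
    rw [formB_expand, hziso, formB_comm e z, hze]; ring
  have hyu : ∀ t : ℝ, formB p q (e + t • z - u) (e + t • z - u)
      = (formB p q e e - 2 * formB p q e u + formB p q u u) + t * (-2 * formB p q z u) := by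
    intro t
    have h : e + t • z - u = (e - u) + t • z := by ext i; simp; ring
    rw [h, formB_expand, hziso, formB_sub_left e u z, formB_sub_left e u (e - u),
      formB_sub_right e e u, formB_sub_right u e u,
      formB_comm e z, hze, formB_comm u z, formB_comm u e]
    ring
  obtain ⟨t, ht⟩ := linear_hits (-2 * formB p q z u)
    (formB p q e e - 2 * formB p q e u + formB p q u u) 1 (by intro h; apply hzu; linarith)
  refine ⟨w + (e + t • z), ?_, ?_⟩
  · have h1 : w + (e + t • z) - v = e + t • z - u := by ext i; simp [hu]; ring
    rw [h1, hyu, ht]; norm_num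
  · have h2 : w + (e + t • z) - w = e + t • z := by ext i; simp
    rw [h2, hyq]; exact hee

/-- a half-space meets every translate of `U_S` (needs `2 ≤ q`). -/
lemma meet_HS (hq : 2 ≤ q) (z : Fin (p+q) → ℝ) (hz : z ≠ 0) (α : ℝ) (v : Fin (p+q) → ℝ) :
    ∃ x, formB p q z x > α ∧ formB p q (x - v) (x - v) > 0 := by
  obtain ⟨w₀, hw₀⟩ := formB_surj z hz (α + 1)
  obtain ⟨e, hze, hee⟩ := exists_perp_pos hq z
  obtain ⟨t0, _, ht0⟩ := quad_eventually_pos (formB p q e e) (formB p q (w₀ - v) e)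
    (formB p q (w₀ - v) (w₀ - v)) hee
  refine ⟨w₀ + t0 • e, ?_, ?_⟩
  · rw [formB_add_right, formB_smul_right, hw₀, hze]; linarith
  · have h1 : w₀ + t0 • e - v = (w₀ - v) + t0 • e := by ext i; simp; ring
    rw [h1, formB_expand]
    have := ht0 t0 (le_refl _)
    nlinarith

/-- a half-space meets every translate of `U_T` (needs `2 ≤ p`). -/
lemma meet_HT (hp : 2 ≤ p) (z : Fin (p+q) → ℝ) (hz : z ≠ 0) (α : ℝ) (v : Fin (p+q) → ℝ) :
    ∃ x, formB p q z x > α ∧ formB p q (x - v) (x - v) < 0 := by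
  obtain ⟨w₀, hw₀⟩ := formB_surj z hz (α + 1)
  obtain ⟨e, hze, hee⟩ := exists_perp_neg hp z
  obtain ⟨t0, _, ht0⟩ := quad_eventually_pos (-formB p q e e) (-(formB p q (w₀ - v) e))
    (-(formB p q (w₀ - v) (w₀ - v))) (by linarith)
  refine ⟨w₀ + t0 • e, ?_, ?_⟩
  · rw [formB_add_right, formB_smul_right, hw₀, hze]; linarith
  · have h1 : w₀ + t0 • e - v = (w₀ - v) + t0 • e := by ext i; simp; ring
    rw [h1, formB_expand]
    have := ht0 t0 (le_refl _)
    nlinarith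

/-- one-sided "kernel" lemma: if `z` is not a multiple of `z'` (`z' ≠ 0`), there is `x`
with `formB z' x = 0` and `formB z x = 1`. -/
lemma exists_ker_val (z z' : Fin (p+q) → ℝ) (hz' : z' ≠ 0)
    (h : ∀ c : ℝ, z ≠ c • z') : ∃ x, formB p q z' x = 0 ∧ formB p q z x = 1 := by
  by_cases hker : ∀ x, formB p q z' x = 0 → formB p q z x = 0
  · exfalso
    obtain ⟨u, hu⟩ := formB_surj z' hz' 1
    set c : ℝ := formB p q z u with hc
    have key : ∀ x, formB p q z x = c * formB p q z' x := by
      intro x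
      have h1 : formB p q z' (x - (formB p q z' x) • u) = 0 := by
        rw [formB_sub_right, formB_smul_right, hu]; ring
      have h2 := hker _ h1
      rw [formB_sub_right, formB_smul_right] at h2
      linarith [h2]
    have : z = c • z' := by
      have hz0 : ∀ x, formB p q (z - c • z') x = 0 := by
        intro x; rw [formB_sub_left, formB_smul_left, key x]; ring
      have := eq_zero_of_formB_eq_zero _ hz0
      have h3 : z - c • z' = 0 := this
      ext i; have := congrFun h3 i; simp at this ⊢; linarith
    exact h c this
  · push_neg at hker
    obtain ⟨x, hx1, hx2⟩ := hker
    refine ⟨(formB p q z x)⁻¹ • x, ?_, ?_⟩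
    · rw [formB_smul_right, hx1]; ring
    · rw [formB_smul_right]; field_simp

/-- two half-spaces with independent directions always meet. -/
lemma meet_HH_indep (z z' : Fin (p+q) → ℝ) (hz : z ≠ 0)
    (hindep : ∀ c : ℝ, z' ≠ c • z) (α β : ℝ) :
    ∃ x, formB p q z x > α ∧ formB p q z' x > β := by
  have hz' : z' ≠ 0 := by intro h; exact hindep 0 (by rw [h]; simp)
  have hindep' : ∀ c : ℝ, z ≠ c • z' := by
    intro c h
    rcases eq_or_ne c 0 with rfl | hc
    · exact hz (by rw [h]; simp)
    · exact hindep c⁻¹ (by rw [h]; ext i; simp; field_simp)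
  obtain ⟨x₁, hx₁0, hx₁1⟩ := exists_ker_val z z' hz' hindep'
  obtain ⟨x₂, hx₂0, hx₂1⟩ := exists_ker_val z' z hz hindep
  refine ⟨(α+1) • x₁ + (β+1) • x₂, ?_, ?_⟩
  · rw [formB_add_right, formB_smul_right, formB_smul_right, hx₁1, hx₂0]; linarith
  · rw [formB_add_right, formB_smul_right, formB_smul_right, hx₁0, hx₂1]; linarith

/-- two half-spaces with positively-proportional directions always meet. -/
lemma meet_HH_pos (z : Fin (p+q) → ℝ) (hz : z ≠ 0) (c : ℝ) (hc : 0 < c) (α β : ℝ) :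
    ∃ x, formB p q z x > α ∧ formB p q (c • z) x > β := by
  obtain ⟨x, hx⟩ := formB_surj z hz (max α (β/c) + 1)
  refine ⟨x, ?_, ?_⟩
  · rw [hx]; have := le_max_left α (β/c); linarith
  · rw [formB_smul_left, hx]
    have h1 : β/c ≤ max α (β/c) := le_max_right _ _
    have : β / c < max α (β / c) + 1 := by linarith
    calc β = c * (β / c) := by field_simp
    _ < c * (max α (β/c) + 1) := by exact mul_lt_mul_of_pos_left (by linarith) hc

/-- opposite half-spaces meet iff thresholds are compatible. -/
lemma meet_HH_neg (z : Fin (p+q) → ℝ) (hz : z ≠ 0) (c : ℝ) (hc : c < 0) (α β : ℝ)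
    (h : α < β / c) : ∃ x, formB p q z x > α ∧ formB p q (c • z) x > β := by
  obtain ⟨x, hx⟩ := formB_surj z hz ((α + β/c)/2)
  refine ⟨x, by rw [hx]; linarith, ?_⟩
  rw [formB_smul_left, hx]
  have h2 : (α + β/c)/2 < β / c := by linarith
  have hcne : c ≠ 0 := ne_of_lt hc
  calc β = c * (β / c) := by field_simp
  _ < c * ((α + β/c)/2) := by exact (mul_lt_mul_left_of_neg hc).mpr h2

lemma empty_HH_neg (z : Fin (p+q) → ℝ) (c : ℝ) (hc : c < 0) (α β : ℝ)
    (h : β / c ≤ α) (x : Fin (p+q) → ℝ) :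
    ¬ (formB p q z x > α ∧ formB p q (c • z) x > β) := by
  rintro ⟨h1, h2⟩
  rw [formB_smul_left] at h2
  have hcne : c ≠ 0 := ne_of_lt hc
  have : formB p q z x < β / c := by
    rw [lt_div_iff_of_neg hc]; linarith
  linarith

/-- disjoint half-spaces have negatively-proportional directions. -/
lemma disj_HH_struct (z z' : Fin (p+q) → ℝ) (hz : z ≠ 0) (hz' : z' ≠ 0) (α β : ℝ)
    (hdisj : ∀ x, ¬ (formB p q z x > α ∧ formB p q z' x > β)) :
    ∃ c : ℝ, c < 0 ∧ z' = c • z := by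
  by_cases hdep : ∃ c : ℝ, z' = c • z
  · obtain ⟨c, rfl⟩ := hdep
    refine ⟨c, ?_, rfl⟩
    rcases lt_trichotomy c 0 with h | h | h
    · exact h
    · exfalso; apply hz'; rw [h]; simp
    · exfalso; obtain ⟨x, hx⟩ := meet_HH_pos z hz c h α β; exact hdisj x hx
  · push_neg at hdep
    exfalso
    obtain ⟨x, hx⟩ := meet_HH_indep z z' hz hdep α β
    exact hdisj x hx

/-! ### set identities -/

lemma H_smul_pos (z : Fin (p+q) → ℝ) (c : ℝ) (hc : 0 < c) (β : ℝ) :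
    {x | formB p q (c • z) x > β} = {x | formB p q z x > β / c} := by
  ext x
  simp only [Set.mem_setOf_eq, formB_smul_left]
  rw [gt_iff_lt, gt_iff_lt, div_lt_iff₀ hc, mul_comm]

lemma H_smul_neg (z : Fin (p+q) → ℝ) (c : ℝ) (hc : c < 0) (β : ℝ) :
    {x | formB p q (c • z) x > β} = {x | formB p q (-z) x > -(β / c)} := by
  ext x
  simp only [Set.mem_setOf_eq, formB_smul_left, formB_neg_left]
  rw [gt_iff_lt, gt_iff_lt, neg_lt_neg_iff, lt_div_iff_of_neg hc, mul_comm]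

lemma H_inj (z : Fin (p+q) → ℝ) (hz : z ≠ 0) (α α' : ℝ)
    (h : {x | formB p q z x > α} = {x | formB p q z x > α'}) : α = α' := by
  by_contra hne
  rcases lt_or_gt_of_ne hne with hlt | hlt
  · obtain ⟨x, hx⟩ := formB_surj z hz ((α + α')/2)
    have hx1 : x ∈ {x | formB p q z x > α} := by simp only [Set.mem_setOf_eq, hx]; linarith
    rw [h] at hx1
    simp only [Set.mem_setOf_eq, hx] at hx1; linarith
  · obtain ⟨x, hx⟩ := formB_surj z hz ((α + α')/2)
    have hx1 : x ∈ {x | formB p q z x > α'} := by simp only [Set.mem_setOf_eq, hx]; linarith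
    rw [← h] at hx1
    simp only [Set.mem_setOf_eq, hx] at hx1; linarith

lemma H_empty_iff (z : Fin (p+q) → ℝ) (hz : z ≠ 0) (α β : ℝ)
    (hdisj : ∀ x, ¬ (formB p q z x > α ∧ formB p q (-z) x > β)) : -α ≤ β := by
  by_contra hc
  push_neg at hc
  obtain ⟨x, hx⟩ := formB_surj z hz ((α + (-β))/2)
  apply hdisj x
  constructor
  · rw [hx]; linarith
  · rw [formB_neg_left, hx]; linarith

/-! ### path connectedness of the quadric regions -/

lemma joinedIn_segment {s : Set (Fin (p+q) → ℝ)} {x y : Fin (p+q) → ℝ}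
    (h : ∀ t : ℝ, t ∈ Set.Icc (0:ℝ) 1 → (1-t) • x + t • y ∈ s) : JoinedIn s x y := by
  refine ⟨⟨⟨fun t => (1-(t:ℝ)) • x + (t:ℝ) • y, ?_⟩, ?_, ?_⟩, fun t => h t t.2⟩
  · fun_prop
  · simp
  · simp

lemma formB_self_pos_of_coord (z : Fin (p+q) → ℝ) (hsupp : ∀ i : Fin (p+q), (i:ℕ) < p → z i = 0)
    (j : Fin (p+q)) (hj : p ≤ (j:ℕ)) (hzj : z j ≠ 0) : formB p q z z > 0 := by
  unfold formB
  apply Finset.sum_pos'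
  · intro i _
    by_cases hip : (i:ℕ) < p
    · simp [hip, hsupp i hip]
    · simp [hip]; exact mul_self_nonneg _
  · refine ⟨j, Finset.mem_univ j, ?_⟩
    simp [Nat.not_lt.mpr hj]
    exact hzj

lemma formB_self_neg_of_coord (z : Fin (p+q) → ℝ) (hsupp : ∀ i : Fin (p+q), p ≤ (i:ℕ) → z i = 0)
    (j : Fin (p+q)) (hj : (j:ℕ) < p) (hzj : z j ≠ 0) : formB p q z z < 0 := by
  have : (0:ℝ) < ∑ i : Fin (p+q), (if (i:ℕ) < p then z i * z i else 0) := by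
    apply Finset.sum_pos'
    · intro i _; by_cases hip : (i:ℕ) < p
      · simp [hip]; exact mul_self_nonneg _
      · simp [hip]
    · exact ⟨j, Finset.mem_univ j, by simp [hj]; exact hzj⟩
  have heq : formB p q z z = -∑ i : Fin (p+q), (if (i:ℕ) < p then z i * z i else 0) := by
    unfold formB
    rw [← Finset.sum_neg_distrib]
    congr 1; ext i
    by_cases hip : (i:ℕ) < p
    · simp [hip]
    · simp [hip, hsupp i (Nat.not_lt.mp hip)]
  rw [heq]; linarith

/-- killing the negative part stays inside `U_S`. -/
lemma joined_posPart (x : Fin (p+q) → ℝ) (hx : formB p q x x > 0) :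
    JoinedIn {y | formB p q y y > 0} x (fun i : Fin (p+q) => if (i:ℕ) < p then 0 else x i) := by
  apply joinedIn_segment
  intro t ht
  simp only [Set.mem_setOf_eq]
  have hge : formB p q ((1-t) • x + t • (fun i : Fin (p+q) => if (i:ℕ) < p then 0 else x i))
      ((1-t) • x + t • (fun i : Fin (p+q) => if (i:ℕ) < p then 0 else x i)) ≥ formB p q x x := by
    unfold formB
    apply Finset.sum_le_sum
    intro i _
    by_cases hip : (i:ℕ) < p
    · simp only [Pi.add_apply, Pi.smul_apply, smul_eq_mul, hip, if_true, mul_zero, add_zero]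
      have h1 : 0 ≤ t := ht.1
      have h2 : t ≤ 1 := ht.2
      nlinarith [mul_nonneg (mul_nonneg h1 (by linarith : (0:ℝ) ≤ 2 - t)) (mul_self_nonneg (x i))]
    · simp only [Pi.add_apply, Pi.smul_apply, smul_eq_mul, hip, if_false]
      have : (1-t) * x i + t * x i = x i := by ring
      rw [this]
  linarith

/-- killing the positive part stays inside `U_T`. -/
lemma joined_negPart (x : Fin (p+q) → ℝ) (hx : formB p q x x < 0) :
    JoinedIn {y | formB p q y y < 0} x (fun i : Fin (p+q) => if (i:ℕ) < p then x i else 0) := by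
  apply joinedIn_segment
  intro t ht
  simp only [Set.mem_setOf_eq]
  have hge : formB p q ((1-t) • x + t • (fun i : Fin (p+q) => if (i:ℕ) < p then x i else 0))
      ((1-t) • x + t • (fun i : Fin (p+q) => if (i:ℕ) < p then x i else 0)) ≤ formB p q x x := by
    unfold formB
    apply Finset.sum_le_sum
    intro i _
    by_cases hip : (i:ℕ) < p
    · simp only [Pi.add_apply, Pi.smul_apply, smul_eq_mul, hip, if_true]
      have : (1-t) * x i + t * x i = x i := by ring
      rw [this]
    · simp only [Pi.add_apply, Pi.smul_apply, smul_eq_mul, hip, if_false, mul_zero, add_zero]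
      have h1 : 0 ≤ t := ht.1
      have h2 : t ≤ 1 := ht.2
      nlinarith [mul_nonneg (mul_nonneg h1 (by linarith : (0:ℝ) ≤ 2 - t)) (mul_self_nonneg (x i))]
  linarith

/-- joining a positively-supported vector to a single basis multiple inside `U_S`. -/
lemma joined_single_pos (a : Fin (p+q) → ℝ) (hsupp : ∀ i : Fin (p+q), (i:ℕ) < p → a i = 0)
    (ha : formB p q a a > 0) (j : Fin (p+q)) (hj : p ≤ (j:ℕ)) (c : ℝ) (hc : c ≠ 0)
    (hsign : 0 ≤ a j * c) : JoinedIn {y | formB p q y y > 0} a (Pi.single j c) := by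
  apply joinedIn_segment
  intro t ht
  simp only [Set.mem_setOf_eq]
  rcases eq_or_lt_of_le ht.1 with h0 | h0
  · have : (1-t) • a + t • (Pi.single j c : Fin (p+q) → ℝ) = a := by rw [← h0]; ext i; simp
    rw [this]; exact ha
  · apply formB_self_pos_of_coord _ ?_ j hj
    · simp only [Pi.add_apply, Pi.smul_apply, smul_eq_mul, Pi.single_eq_same]
      rcases lt_or_gt_of_ne hc with hcneg | hcpos
      · have haj : a j ≤ 0 := by nlinarith
        have : (1-t) * a j + t * c < 0 := by nlinarith [ht.2]
        linarith
      · have haj : 0 ≤ a j := by nlinarith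
        have : (1-t) * a j + t * c > 0 := by nlinarith [ht.2]
        linarith
    · intro i hip
      have hij : i ≠ j := by intro h; rw [h] at hip; omega
      simp [hsupp i hip, Pi.single_eq_of_ne hij]

/-- joining a negatively-supported vector to a single basis multiple inside `U_T`. -/
lemma joined_single_neg (a : Fin (p+q) → ℝ) (hsupp : ∀ i : Fin (p+q), p ≤ (i:ℕ) → a i = 0)
    (ha : formB p q a a < 0) (j : Fin (p+q)) (hj : (j:ℕ) < p) (c : ℝ) (hc : c ≠ 0)
    (hsign : 0 ≤ a j * c) : JoinedIn {y | formB p q y y < 0} a (Pi.single j c) := by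
  apply joinedIn_segment
  intro t ht
  simp only [Set.mem_setOf_eq]
  rcases eq_or_lt_of_le ht.1 with h0 | h0
  · have : (1-t) • a + t • (Pi.single j c : Fin (p+q) → ℝ) = a := by rw [← h0]; ext i; simp
    rw [this]; exact ha
  · apply formB_self_neg_of_coord _ ?_ j hj
    · simp only [Pi.add_apply, Pi.smul_apply, smul_eq_mul, Pi.single_eq_same]
      rcases lt_or_gt_of_ne hc with hcneg | hcpos
      · have haj : a j ≤ 0 := by nlinarith
        have : (1-t) * a j + t * c < 0 := by nlinarith [ht.2]
        linarith
      · have haj : 0 ≤ a j := by nlinarith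
        have : (1-t) * a j + t * c > 0 := by nlinarith [ht.2]
        linarith
    · intro i hip
      have hij : i ≠ j := by intro h; rw [h] at hip; omega
      simp [hsupp i hip, Pi.single_eq_of_ne hij]

lemma isPathConnected_US (hq : 2 ≤ q) :
    IsPathConnected {y : Fin (p+q) → ℝ | formB p q y y > 0} := by
  have hP : p < p + q := by omega
  have hP1 : p + 1 < p + q := by omega
  set J : Fin (p+q) := ⟨p, hP⟩
  set J2 : Fin (p+q) := ⟨p+1, hP1⟩
  have hJ : p ≤ (J:ℕ) := le_refl p
  have hJ2 : p ≤ (J2:ℕ) := Nat.le_succ p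
  set E : Fin (p+q) → ℝ := Pi.single J 1 with hE
  have hEsupp : ∀ i : Fin (p+q), (i:ℕ) < p → E i = 0 := by
    intro i hip
    have : i ≠ J := by intro h; rw [h] at hip; omega
    simp [hE, Pi.single_eq_of_ne this]
  have hEmem : formB p q E E > 0 := by
    rw [hE, sq_single J hJ 1]; norm_num
  refine ⟨E, hEmem, ?_⟩
  intro y hy
  -- y⁺
  set yp : Fin (p+q) → ℝ := fun i : Fin (p+q) => if (i:ℕ) < p then 0 else y i with hyp
  have hypsupp : ∀ i : Fin (p+q), (i:ℕ) < p → yp i = 0 := by intro i hip; simp [hyp, hip]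
  have hjoin1 : JoinedIn {y : Fin (p+q) → ℝ | formB p q y y > 0} y yp :=
    joined_posPart y hy
  have hypmem : formB p q yp yp > 0 := hjoin1.target_mem
  -- connect yp to E
  have hjoin2 : JoinedIn {y : Fin (p+q) → ℝ | formB p q y y > 0} yp E := by
    by_cases hsign : 0 ≤ yp J
    · have := joined_single_pos yp hypsupp hypmem J hJ 1 one_ne_zero (by simpa using hsign)
      simpa [hE] using this
    · push_neg at hsign
      set c2 : ℝ := if 0 ≤ yp J2 then 1 else -1 with hc2
      have hc2ne : c2 ≠ 0 := by rw [hc2]; split <;> norm_num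
      have hsign2 : 0 ≤ yp J2 * c2 := by
        rw [hc2]; split
        · simpa using ‹0 ≤ yp J2›
        · rename_i hneg; push_neg at hneg; nlinarith
      have hm1 : JoinedIn {y : Fin (p+q) → ℝ | formB p q y y > 0} yp (Pi.single J2 c2) :=
        joined_single_pos yp hypsupp hypmem J2 hJ2 c2 hc2ne hsign2
      have hmsupp : ∀ i : Fin (p+q), (i:ℕ) < p → (Pi.single J2 c2 : Fin (p+q) → ℝ) i = 0 := by
        intro i hip
        have : i ≠ J2 := by intro h; rw [h] at hip; omega
        simp [Pi.single_eq_of_ne this]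
      have hmmem : formB p q (Pi.single J2 c2 : Fin (p+q) → ℝ) (Pi.single J2 c2) > 0 := by
        rw [sq_single J2 hJ2 c2]; exact mul_self_pos.mpr hc2ne
      have hJne : J ≠ J2 := by simp [J, J2, Fin.ext_iff]
      have hm2 : JoinedIn {y : Fin (p+q) → ℝ | formB p q y y > 0} (Pi.single J2 c2) E := by
        have := joined_single_pos (Pi.single J2 c2 : Fin (p+q) → ℝ) hmsupp hmmem J hJ 1
          one_ne_zero (by rw [Pi.single_eq_of_ne hJne]; norm_num)
        simpa [hE] using this
      exact hm1.trans hm2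
  exact (hjoin1.trans hjoin2).symm

lemma isPathConnected_UT (hp : 2 ≤ p) :
    IsPathConnected {y : Fin (p+q) → ℝ | formB p q y y < 0} := by
  have hP : 0 < p + q := by omega
  have hP1 : 1 < p + q := by omega
  set J : Fin (p+q) := ⟨0, hP⟩
  set J2 : Fin (p+q) := ⟨1, hP1⟩
  have hJ : (J:ℕ) < p := by simp [J]; omega
  have hJ2 : (J2:ℕ) < p := by simp [J2]; omega
  set E : Fin (p+q) → ℝ := Pi.single J 1 with hE
  have hEsupp : ∀ i : Fin (p+q), p ≤ (i:ℕ) → E i = 0 := by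
    intro i hip
    have : i ≠ J := by intro h; rw [h] at hip; simp [J] at hip; omega
    simp [hE, Pi.single_eq_of_ne this]
  have hEmem : formB p q E E < 0 := by
    rw [hE, sq_single_neg J hJ 1]; norm_num
  refine ⟨E, hEmem, ?_⟩
  intro y hy
  set yp : Fin (p+q) → ℝ := fun i : Fin (p+q) => if (i:ℕ) < p then y i else 0 with hyp
  have hypsupp : ∀ i : Fin (p+q), p ≤ (i:ℕ) → yp i = 0 := by
    intro i hip; simp [hyp, Nat.not_lt.mpr hip]
  have hjoin1 : JoinedIn {y : Fin (p+q) → ℝ | formB p q y y < 0} y yp :=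
    joined_negPart y hy
  have hypmem : formB p q yp yp < 0 := hjoin1.target_mem
  have hjoin2 : JoinedIn {y : Fin (p+q) → ℝ | formB p q y y < 0} yp E := by
    by_cases hsign : 0 ≤ yp J
    · have := joined_single_neg yp hypsupp hypmem J hJ 1 one_ne_zero (by simpa using hsign)
      simpa [hE] using this
    · push_neg at hsign
      set c2 : ℝ := if 0 ≤ yp J2 then 1 else -1 with hc2
      have hc2ne : c2 ≠ 0 := by rw [hc2]; split <;> norm_num
      have hsign2 : 0 ≤ yp J2 * c2 := by
        rw [hc2]; split
        · simpa using ‹0 ≤ yp J2›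
        · rename_i hneg; push_neg at hneg; nlinarith
      have hm1 : JoinedIn {y : Fin (p+q) → ℝ | formB p q y y < 0} yp (Pi.single J2 c2) :=
        joined_single_neg yp hypsupp hypmem J2 hJ2 c2 hc2ne hsign2
      have hmsupp : ∀ i : Fin (p+q), p ≤ (i:ℕ) → (Pi.single J2 c2 : Fin (p+q) → ℝ) i = 0 := by
        intro i hip
        have : i ≠ J2 := by intro h; rw [h] at hip; simp [J2] at hip; omega
        simp [Pi.single_eq_of_ne this]
      have hmmem : formB p q (Pi.single J2 c2 : Fin (p+q) → ℝ) (Pi.single J2 c2) < 0 := by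
        rw [sq_single_neg J2 hJ2 c2]
        have := mul_self_pos.mpr hc2ne; linarith
      have hJne : J ≠ J2 := by simp [J, J2, Fin.ext_iff]
      have hm2 : JoinedIn {y : Fin (p+q) → ℝ | formB p q y y < 0} (Pi.single J2 c2) E := by
        have := joined_single_neg (Pi.single J2 c2 : Fin (p+q) → ℝ) hmsupp hmmem J hJ 1
          one_ne_zero (by rw [Pi.single_eq_of_ne hJne]; norm_num)
        simpa [hE] using this
      exact hm1.trans hm2
  exact (hjoin1.trans hjoin2).symm

/-! ### topology of the three kinds of sets -/

lemma continuous_formB_right (v : Fin (p+q) → ℝ) :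
    Continuous (fun w : Fin (p+q) → ℝ => formB p q v w) := by
  unfold formB
  apply continuous_finset_sum
  intro i _
  by_cases hip : (i:ℕ) < p
  · simp only [hip, if_true]; fun_prop
  · simp only [hip, if_false]; fun_prop

lemma continuous_quad (v : Fin (p+q) → ℝ) :
    Continuous (fun w : Fin (p+q) → ℝ => formB p q (w - v) (w - v)) := by
  unfold formB
  apply continuous_finset_sum
  intro i _
  by_cases hip : (i:ℕ) < p
  · simp only [hip, if_true]
    have : Continuous (fun w : Fin (p+q) → ℝ => (w - v) i) := by fun_prop
    fun_prop
  · simp only [hip, if_false]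
    fun_prop

lemma isOpen_H (z : Fin (p+q) → ℝ) (α : ℝ) : IsOpen {x | formB p q z x > α} :=
  isOpen_lt continuous_const (continuous_formB_right z)

lemma isOpen_S (v : Fin (p+q) → ℝ) : IsOpen {x | formB p q (x - v) (x - v) > 0} :=
  isOpen_lt continuous_const (continuous_quad v)

lemma isOpen_T (v : Fin (p+q) → ℝ) : IsOpen {x | formB p q (x - v) (x - v) < 0} :=
  isOpen_lt (continuous_quad v) continuous_const

lemma isPreconnected_S (hq : 2 ≤ q) (v : Fin (p+q) → ℝ) :
    IsPreconnected {x | formB p q (x - v) (x - v) > 0} := by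
  have himg : {x : Fin (p+q) → ℝ | formB p q (x - v) (x - v) > 0}
      = (fun x => x + v) '' {x : Fin (p+q) → ℝ | formB p q x x > 0} := by
    ext w
    simp only [Set.mem_image, Set.mem_setOf_eq]
    constructor
    · intro h; exact ⟨w - v, h, by ext i; simp⟩
    · rintro ⟨x, hx, rfl⟩
      have : x + v - v = x := by ext i; simp
      rw [this]; exact hx
  rw [himg]
  exact (((isPathConnected_US hq).image (by fun_prop)).isConnected).isPreconnected

lemma isPreconnected_T (hp : 2 ≤ p) (v : Fin (p+q) → ℝ) :
    IsPreconnected {x | formB p q (x - v) (x - v) < 0} := by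
  have himg : {x : Fin (p+q) → ℝ | formB p q (x - v) (x - v) < 0}
      = (fun x => x + v) '' {x : Fin (p+q) → ℝ | formB p q x x < 0} := by
    ext w
    simp only [Set.mem_image, Set.mem_setOf_eq]
    constructor
    · intro h; exact ⟨w - v, h, by ext i; simp⟩
    · rintro ⟨x, hx, rfl⟩
      have : x + v - v = x := by ext i; simp
      rw [this]; exact hx
  rw [himg]
  exact (((isPathConnected_UT hp).image (by fun_prop)).isConnected).isPreconnected

lemma isPreconnected_H (z : Fin (p+q) → ℝ) (α : ℝ) :
    IsPreconnected {x | formB p q z x > α} := by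
  have : Convex ℝ {x : Fin (p+q) → ℝ | formB p q z x > α} := by
    apply convex_halfSpace_gt
    exact ⟨fun x y => formB_add_right z x y, fun c x => by
      rw [formB_smul_right]; rfl⟩
  exact this.isPreconnected

/-! ### backward direction -/

lemma backward_case1 {l : ℕ} (hl : 2 ≤ l) (W : Fin l → Set (Fin (p+q) → ℝ))
    (hne : ∀ i, (W i).Nonempty)
    (v : Fin (p+q) → ℝ) (α : Fin l → ℝ) (σ : Equiv.Perm (Fin l)) (k₀ : ℕ)
    (hk1 : 1 ≤ k₀) (hk2 : k₀ ≤ l - 1)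
    (hstrict : ∀ i j : Fin l, i < j → ((j : ℕ) < k₀ ∨ k₀ ≤ (i : ℕ)) → α j < α i)
    (hcross : ∀ i j : Fin l, (i : ℕ) < k₀ → k₀ ≤ (j : ℕ) → α j ≤ α i)
    (hW : ∀ i : Fin l, W (σ i) =
      if (i : ℕ) < k₀ then {w | formB p q v w > α i}
      else {w | formB p q (-v) w > -(α i)}) :
    ¬ IsConnected (⋃ i, W i) := by
  have hk₀l : k₀ < l := by omega
  set i1 : Fin l := ⟨k₀ - 1, by omega⟩ with hi1
  set i2 : Fin l := ⟨k₀, hk₀l⟩ with hi2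
  have hi1k : (i1 : ℕ) < k₀ := by simp [hi1]; omega
  have hi2k : k₀ ≤ (i2 : ℕ) := le_refl _
  -- monotone helpers
  have hle1 : ∀ i : Fin l, (i : ℕ) < k₀ → α i1 ≤ α i := by
    intro i hi
    rcases eq_or_ne i i1 with rfl | hne'
    · exact le_refl _
    · have hlt : i < i1 := by
        rw [Fin.lt_def]
        have : (i : ℕ) ≠ (i1 : ℕ) := fun h => hne' (Fin.ext h)
        simp [hi1] at this ⊢
        omega
      exact le_of_lt (hstrict i i1 hlt (Or.inl hi1k))
  have hle2 : ∀ i : Fin l, k₀ ≤ (i : ℕ) → α i ≤ α i2 := by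
    intro i hi
    rcases eq_or_ne i i2 with rfl | hne'
    · exact le_refl _
    · have hlt : i2 < i := by
        rw [Fin.lt_def]
        have : (i : ℕ) ≠ (i2 : ℕ) := fun h => hne' (Fin.ext h)
        simp [hi2] at this ⊢
        omega
      exact le_of_lt (hstrict i2 i hlt (Or.inr hi2k))
  intro hcon
  have hpc := hcon.isPreconnected
  have h12 : α i2 ≤ α i1 := hcross i1 i2 hi1k hi2k
  have hopen1 : IsOpen {x : Fin (p+q) → ℝ | formB p q v x > α i1} := isOpen_H v (α i1)
  have hopen2 : IsOpen {x : Fin (p+q) → ℝ | formB p q v x < α i2} :=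
    isOpen_lt (continuous_formB_right v) continuous_const
  have hcover : (⋃ i, W i) ⊆ {x | formB p q v x > α i1} ∪ {x | formB p q v x < α i2} := by
    intro x hx
    obtain ⟨k, hk⟩ := Set.mem_iUnion.mp hx
    set i : Fin l := σ.symm k with hisym
    have hWk : W k = W (σ i) := by rw [hisym, Equiv.apply_symm_apply]
    rw [hWk, hW i] at hk
    by_cases hik : (i : ℕ) < k₀
    · rw [if_pos hik] at hk
      left
      have := hle1 i hik
      simp only [Set.mem_setOf_eq] at hk ⊢
      linarith
    · rw [if_neg hik] at hk
      right
      simp only [Set.mem_setOf_eq, formB_neg_left] at hk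
      have := hle2 i (Nat.not_lt.mp hik)
      simp only [Set.mem_setOf_eq]
      linarith
  have hne1 : ((⋃ i, W i) ∩ {x | formB p q v x > α i1}).Nonempty := by
    set j0 : Fin l := ⟨0, by omega⟩ with hj0
    obtain ⟨x, hx⟩ := hne (σ j0)
    refine ⟨x, Set.mem_iUnion.mpr ⟨σ j0, hx⟩, ?_⟩
    have h0k : ((j0 : Fin l) : ℕ) < k₀ := by simp [hj0]; omega
    rw [hW j0, if_pos h0k] at hx
    have := hle1 j0 h0k
    simp only [Set.mem_setOf_eq] at hx ⊢
    linarith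
  have hne2 : ((⋃ i, W i) ∩ {x | formB p q v x < α i2}).Nonempty := by
    set jl : Fin l := ⟨l - 1, by omega⟩ with hjl
    obtain ⟨x, hx⟩ := hne (σ jl)
    refine ⟨x, Set.mem_iUnion.mpr ⟨σ jl, hx⟩, ?_⟩
    have hlk : k₀ ≤ ((jl : Fin l) : ℕ) := by simp [hjl]; omega
    rw [hW jl, if_neg (by omega)] at hx
    simp only [Set.mem_setOf_eq, formB_neg_left] at hx
    have := hle2 jl hlk
    simp only [Set.mem_setOf_eq]
    linarith
  obtain ⟨x, _, hx1, hx2⟩ := hpc _ _ hopen1 hopen2 hcover hne1 hne2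
  simp only [Set.mem_setOf_eq] at hx1 hx2
  linarith

lemma backward_case2 {l : ℕ} (hl : l = 2) (W : Fin l → Set (Fin (p+q) → ℝ))
    (hne : ∀ i, (W i).Nonempty) (v : Fin (p+q) → ℝ) (i j : Fin l) (hij : i ≠ j)
    (hWi : W i = {w | formB p q (w - v) (w - v) > 0})
    (hWj : W j = {w | formB p q (w - v) (w - v) < 0}) :
    ¬ IsConnected (⋃ k, W k) := by
  intro hcon
  have hpc := hcon.isPreconnected
  have hcover : (⋃ k, W k) ⊆ {x | formB p q (x - v) (x - v) > 0}
      ∪ {x | formB p q (x - v) (x - v) < 0} := by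
    intro x hx
    obtain ⟨k, hk⟩ := Set.mem_iUnion.mp hx
    have : k = i ∨ k = j := by
      have hvals : (k : ℕ) < l ∧ (i : ℕ) < l ∧ (j : ℕ) < l := ⟨k.2, i.2, j.2⟩
      have hijv : (i : ℕ) ≠ (j : ℕ) := fun h => hij (Fin.ext h)
      have : (k : ℕ) = (i : ℕ) ∨ (k : ℕ) = (j : ℕ) := by omega
      rcases this with h | h
      · exact Or.inl (Fin.ext h)
      · exact Or.inr (Fin.ext h)
    rcases this with rfl | rfl
    · left; rw [hWi] at hk; exact hk
    · right; rw [hWj] at hk; exact hk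
  have hne1 : ((⋃ k, W k) ∩ {x | formB p q (x - v) (x - v) > 0}).Nonempty := by
    obtain ⟨x, hx⟩ := hne i
    exact ⟨x, Set.mem_iUnion.mpr ⟨i, hx⟩, by rw [hWi] at hx; exact hx⟩
  have hne2 : ((⋃ k, W k) ∩ {x | formB p q (x - v) (x - v) < 0}).Nonempty := by
    obtain ⟨x, hx⟩ := hne j
    exact ⟨x, Set.mem_iUnion.mpr ⟨j, hx⟩, by rw [hWj] at hx; exact hx⟩
  obtain ⟨x, _, hx1, hx2⟩ := hpc _ _ (isOpen_S v) (isOpen_T v) hcover hne1 hne2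
  simp only [Set.mem_setOf_eq] at hx1 hx2
  linarith

/-! ### forward direction: S/T case -/

lemma helper_ST (hp : 2 ≤ p) (hq : 2 ≤ q) {l : ℕ} (hl : 2 ≤ l)
    (W : Fin l → Set (Fin (p+q) → ℝ)) (hdist : Function.Injective W)
    (htype : ∀ i, (∃ v, W i = {w | formB p q (w - v) (w - v) > 0}) ∨
      (∃ v, W i = {w | formB p q (w - v) (w - v) < 0}) ∨
      (∃ v α, v ≠ 0 ∧ formB p q v v = 0 ∧ W i = {w | formB p q v w > α}))
    (k : Fin l) (v : Fin (p+q) → ℝ)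
    (hWk : W k = {w | formB p q (w - v) (w - v) > 0})
    (B : Set (Fin l)) (hkB : k ∉ B) (hBne : B.Nonempty)
    (hBcross : ∀ m ∈ B, ∀ m', m' ∉ B → W m ∩ W m' = ∅) :
    l = 2 ∧ ∃ v : Fin (p + q) → ℝ, ∃ i j : Fin l, i ≠ j ∧
      W i = {w | formB p q (w - v) (w - v) > 0} ∧
      W j = {w | formB p q (w - v) (w - v) < 0} := by
  obtain ⟨j', hj'B⟩ := hBne
  have hTm : ∀ m ∈ B, W m = {w | formB p q (w - v) (w - v) < 0} := by
    intro m hm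
    have hdisj : W m ∩ W k = ∅ := hBcross m hm k hkB
    rcases htype m with ⟨u, hWu⟩ | ⟨u, hWu⟩ | ⟨z, β, hz, hziso, hWu⟩
    · exfalso
      obtain ⟨x, hx1, hx2⟩ := meet_SS (by omega) u v
      have : x ∈ W m ∩ W k := ⟨by rw [hWu]; exact hx1, by rw [hWk]; exact hx2⟩
      rw [hdisj] at this; exact this
    · have huv : u = v := by
        by_contra huv
        obtain ⟨x, hx1, hx2⟩ := meet_ST hp (by omega) v u (fun h => huv h.symm)
        have : x ∈ W m ∩ W k := ⟨by rw [hWu]; exact hx2, by rw [hWk]; exact hx1⟩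
        rw [hdisj] at this; exact this
      rw [hWu, huv]
    · exfalso
      obtain ⟨x, hx1, hx2⟩ := meet_HS hq z hz β v
      have : x ∈ W m ∩ W k := ⟨by rw [hWu]; exact hx1, by rw [hWk]; exact hx2⟩
      rw [hdisj] at this; exact this
  have hSm : ∀ m, m ∉ B → W m = {w | formB p q (w - v) (w - v) > 0} := by
    intro m hm
    have hdisj : W j' ∩ W m = ∅ := hBcross j' hj'B m hm
    have hWj' := hTm j' hj'B
    rcases htype m with ⟨u, hWu⟩ | ⟨u, hWu⟩ | ⟨z, β, hz, hziso, hWu⟩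
    · have huv : u = v := by
        by_contra huv
        obtain ⟨x, hx1, hx2⟩ := meet_ST hp (by omega) u v huv
        have : x ∈ W j' ∩ W m := ⟨by rw [hWj']; exact hx2, by rw [hWu]; exact hx1⟩
        rw [hdisj] at this; exact this
      rw [hWu, huv]
    · exfalso
      obtain ⟨x, hx1, hx2⟩ := meet_TT (by omega) u v
      have : x ∈ W j' ∩ W m := ⟨by rw [hWj']; exact hx2, by rw [hWu]; exact hx1⟩
      rw [hdisj] at this; exact this
    · exfalso
      obtain ⟨x, hx1, hx2⟩ := meet_HT hp z hz β v
      have : x ∈ W j' ∩ W m := ⟨by rw [hWj']; exact hx2, by rw [hWu]; exact hx1⟩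
      rw [hdisj] at this; exact this
  have hall : ∀ m : Fin l, m = k ∨ m = j' := by
    intro m
    by_cases hm : m ∈ B
    · right; exact hdist ((hTm m hm).trans (hTm j' hj'B).symm)
    · left; exact hdist ((hSm m hm).trans (hSm k hkB).symm)
  have hkj' : k ≠ j' := fun h => hkB (h ▸ hj'B)
  have hl2 : l = 2 := by
    have hsub : (Finset.univ : Finset (Fin l)) ⊆ {k, j'} := by
      intro m _
      rcases hall m with rfl | rfl
      · exact Finset.mem_insert_self _ _
      · exact Finset.mem_insert_of_mem (Finset.mem_singleton_self _)
    have h1 : Fintype.card (Fin l) ≤ ({k, j'} : Finset (Fin l)).card := by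
      rw [← Finset.card_univ]; exact Finset.card_le_card hsub
    have h2 : ({k, j'} : Finset (Fin l)).card ≤ 2 := (Finset.card_insert_le _ _).trans
      (by simp)
    simp only [Fintype.card_fin] at h1
    omega
  exact ⟨hl2, v, k, j', hkj', hWk, hTm j' hj'B⟩

/-! ### forward direction: all-half-space case -/

lemma helper_H {l : ℕ} (hl : 2 ≤ l)
    (W : Fin l → Set (Fin (p+q) → ℝ)) (hdist : Function.Injective W)
    (z : Fin l → (Fin (p+q) → ℝ)) (a : Fin l → ℝ)
    (hz : ∀ k, z k ≠ 0) (hziso : ∀ k, formB p q (z k) (z k) = 0)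
    (hWH : ∀ k, W k = {w | formB p q (z k) w > a k})
    (A : Set (Fin l)) (i0 j0 : Fin l) (hi0 : i0 ∈ A) (hj0 : j0 ∉ A)
    (hcross : ∀ a' ∈ A, ∀ b, b ∉ A → W a' ∩ W b = ∅) :
    ∃ v : Fin (p + q) → ℝ, v ≠ 0 ∧ formB p q v v = 0 ∧
      ∃ α : Fin l → ℝ, ∃ σ : Equiv.Perm (Fin l), ∃ k₀ : ℕ,
        1 ≤ k₀ ∧ k₀ ≤ l - 1 ∧
        (∀ i j : Fin l, i < j → ((j : ℕ) < k₀ ∨ k₀ ≤ (i : ℕ)) → α j < α i) ∧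
        (∀ i j : Fin l, (i : ℕ) < k₀ → k₀ ≤ (j : ℕ) → α j ≤ α i) ∧
        (∀ i : Fin l, W (σ i) =
          if (i : ℕ) < k₀ then {w | formB p q v w > α i}
          else {w | formB p q (-v) w > -(α i)}) := by
  classical
  haveI : Nonempty (Fin l) := ⟨i0⟩
  -- pointwise disjointness
  have hdisj : ∀ a' ∈ A, ∀ b, b ∉ A →
      ∀ x, ¬ (formB p q (z a') x > a a' ∧ formB p q (z b) x > a b) := by
    intro a' ha' b hb x hx
    have : x ∈ W a' ∩ W b := ⟨by rw [hWH a']; exact hx.1, by rw [hWH b]; exact hx.2⟩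
    rw [hcross a' ha' b hb] at this; exact this
  set v : Fin (p+q) → ℝ := z i0 with hv
  have hv0 : v ≠ 0 := hz i0
  have hviso : formB p q v v = 0 := hziso i0
  -- structure of directions
  have hB : ∀ b, b ∉ A → ∃ c : ℝ, c < 0 ∧ z b = c • v :=
    fun b hb => (disj_HH_struct v (z b) hv0 (hz b) _ _ (hdisj i0 hi0 b hb)).imp
      (fun c hc => ⟨hc.1, hc.2⟩)
  have hA : ∀ a', a' ∈ A → ∃ d : ℝ, 0 < d ∧ z a' = d • v := by
    intro a' ha'
    obtain ⟨c, hc, hcz⟩ := disj_HH_struct (z a') (z j0) (hz a') (hz j0) _ _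
      (hdisj a' ha' j0 hj0)
    obtain ⟨c0, hc0, hc0z⟩ := hB j0 hj0
    have hcne : c ≠ 0 := ne_of_lt hc
    refine ⟨c0 / c, div_pos_of_neg_of_neg hc0 hc, ?_⟩
    have : c • z a' = c0 • v := by rw [← hcz, hc0z]
    have h2 : z a' = c⁻¹ • (c0 • v) := by
      rw [← this, smul_smul, inv_mul_cancel₀ hcne, one_smul]
    rw [h2, smul_smul]
    congr 1
    field_simp
  have hdv : ∀ k, ∃ d : ℝ, d ≠ 0 ∧ z k = d • v ∧ (k ∈ A → 0 < d) ∧ (k ∉ A → d < 0) := by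
    intro k
    by_cases hk : k ∈ A
    · obtain ⟨d, hd, hdz⟩ := hA k hk
      exact ⟨d, ne_of_gt hd, hdz, fun _ => hd, fun h => absurd hk h⟩
    · obtain ⟨c, hc, hcz⟩ := hB k hk
      exact ⟨c, ne_of_lt hc, hcz, fun h => absurd h hk, fun _ => hc⟩
  choose d hd0 hzd hdpos hdneg using hdv
  set f : Fin l → ℝ := fun k => a k / d k with hf
  have hWA : ∀ k, k ∈ A → W k = {x | formB p q v x > f k} := by
    intro k hk
    rw [hWH k, hzd k, H_smul_pos v (d k) (hdpos k hk) (a k)]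
  have hWB : ∀ k, k ∉ A → W k = {x | formB p q (-v) x > -(f k)} := by
    intro k hk
    rw [hWH k, hzd k, H_smul_neg v (d k) (hdneg k hk) (a k)]
  have hcrossf : ∀ k, k ∈ A → ∀ k', k' ∉ A → f k' ≤ f k := by
    intro k hk k' hk'
    have hd : ∀ x, ¬ (formB p q v x > f k ∧ formB p q (-v) x > -(f k')) := by
      intro x hx
      have : x ∈ W k ∩ W k' := ⟨by rw [hWA k hk]; exact hx.1, by rw [hWB k' hk']; exact hx.2⟩
      rw [hcross k hk k' hk'] at this; exact this
    have := H_empty_iff v hv0 (f k) (-(f k')) hd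
    linarith
  have hinjA : ∀ k, k ∈ A → ∀ k', k' ∈ A → f k = f k' → k = k' := by
    intro k hk k' hk' hff
    apply hdist
    rw [hWA k hk, hWA k' hk', hff]
  have hinjB : ∀ k, k ∉ A → ∀ k', k' ∉ A → f k = f k' → k = k' := by
    intro k hk k' hk' hff
    apply hdist
    rw [hWB k hk, hWB k' hk', hff]
  -- sorting
  set FA : Finset (Fin l) := Finset.univ.filter (· ∈ A) with hFA
  set FB : Finset (Fin l) := Finset.univ.filter (· ∉ A) with hFB
  have hmemFA : ∀ k, k ∈ FA ↔ k ∈ A := by intro k; simp [hFA]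
  have hmemFB : ∀ k, k ∈ FB ↔ k ∉ A := by intro k; simp [hFB]
  set k₀ : ℕ := FA.card with hk₀
  set k₁ : ℕ := FB.card with hk₁
  have hsum : k₀ + k₁ = l := by
    rw [hk₀, hk₁, hFA, hFB]
    rw [Finset.card_filter_add_card_filter_not]
    simp
  have hk₀1 : 1 ≤ k₀ := Finset.card_pos.mpr ⟨i0, (hmemFA i0).mpr hi0⟩
  have hk₁1 : 1 ≤ k₁ := Finset.card_pos.mpr ⟨j0, (hmemFB j0).mpr hj0⟩
  set VA : Finset ℝ := FA.image f with hVA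
  set VB : Finset ℝ := FB.image f with hVB
  have hVAcard : VA.card = k₀ := by
    rw [hVA, Finset.card_image_of_injOn, hk₀]
    intro x hx y hy hxy
    exact hinjA x ((hmemFA x).mp hx) y ((hmemFA y).mp hy) hxy
  have hVBcard : VB.card = k₁ := by
    rw [hVB, Finset.card_image_of_injOn, hk₁]
    intro x hx y hy hxy
    exact hinjB x ((hmemFB x).mp hx) y ((hmemFB y).mp hy) hxy
  set eA : Fin k₀ ≃o {x // x ∈ VA} := VA.orderIsoOfFin hVAcard with heA
  set eB : Fin k₁ ≃o {x // x ∈ VB} := VB.orderIsoOfFin hVBcard with heB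
  set α : Fin l → ℝ := fun i =>
    if h : (i:ℕ) < k₀ then (eA ⟨k₀ - 1 - i, by omega⟩ : ℝ)
    else (eB ⟨l - 1 - i, by omega⟩ : ℝ) with hα
  -- membership facts
  have hαA : ∀ i : Fin l, (h : (i:ℕ) < k₀) → α i ∈ VA := by
    intro i h
    rw [hα]; simp only [h, dif_pos]
    exact (eA ⟨k₀ - 1 - i, by omega⟩).2
  have hαB : ∀ i : Fin l, ¬((i:ℕ) < k₀) → α i ∈ VB := by
    intro i h
    rw [hα]; simp only [h, dif_neg, not_false_iff]
    exact (eB ⟨l - 1 - i, by omega⟩).2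
  set g : Fin l → Fin l := fun i =>
    if (i:ℕ) < k₀ then Function.invFunOn f ↑FA (α i) else Function.invFunOn f ↑FB (α i)
    with hg
  have hgA : ∀ i : Fin l, (h : (i:ℕ) < k₀) → g i ∈ A ∧ f (g i) = α i := by
    intro i h
    have hmem : ∃ x ∈ (↑FA : Set (Fin l)), f x = α i := by
      obtain ⟨x, hx, hfx⟩ := Finset.mem_image.mp (hαA i h)
      exact ⟨x, Finset.mem_coe.mpr hx, hfx⟩
    rw [hg]; simp only [h, if_pos]
    constructor
    · have := Function.invFunOn_mem hmem
      exact (hmemFA _).mp (Finset.mem_coe.mp this)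
    · exact Function.invFunOn_eq hmem
  have hgB : ∀ i : Fin l, ¬((i:ℕ) < k₀) → g i ∉ A ∧ f (g i) = α i := by
    intro i h
    have hmem : ∃ x ∈ (↑FB : Set (Fin l)), f x = α i := by
      obtain ⟨x, hx, hfx⟩ := Finset.mem_image.mp (hαB i h)
      exact ⟨x, Finset.mem_coe.mpr hx, hfx⟩
    rw [hg]; simp only [h, if_neg, not_false_iff]
    constructor
    · have := Function.invFunOn_mem hmem
      exact (hmemFB _).mp (Finset.mem_coe.mp this)
    · exact Function.invFunOn_eq hmem
  -- strict monotonicity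
  have hstrict : ∀ i j : Fin l, i < j → ((j : ℕ) < k₀ ∨ k₀ ≤ (i : ℕ)) → α j < α i := by
    intro i j hij hcase
    have hijv : (i:ℕ) < (j:ℕ) := hij
    rcases hcase with hjk | hik
    · have hik : (i:ℕ) < k₀ := lt_trans hijv hjk
      rw [hα]; simp only [hik, hjk, dif_pos]
      have : (⟨k₀ - 1 - j, by omega⟩ : Fin k₀) < ⟨k₀ - 1 - i, by omega⟩ := by
        rw [Fin.mk_lt_mk]; omega
      exact Subtype.coe_lt_coe.mpr (eA.strictMono this)
    · have hjk : ¬ ((j:ℕ) < k₀) := by omega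
      have hik' : ¬ ((i:ℕ) < k₀) := by omega
      rw [hα]; simp only [hjk, hik', dif_neg, not_false_iff]
      have : (⟨l - 1 - j, by omega⟩ : Fin k₁) < ⟨l - 1 - i, by omega⟩ := by
        rw [Fin.mk_lt_mk]; omega
      exact Subtype.coe_lt_coe.mpr (eB.strictMono this)
  have hcrossα : ∀ i j : Fin l, (i : ℕ) < k₀ → k₀ ≤ (j : ℕ) → α j ≤ α i := by
    intro i j hik hjk
    obtain ⟨hgiA, hfgi⟩ := hgA i hik
    obtain ⟨hgjB, hfgj⟩ := hgB j (by omega)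
    rw [← hfgi, ← hfgj]
    exact hcrossf _ hgiA _ hgjB
  -- injectivity of g
  have hginj : Function.Injective g := by
    intro i j hgij
    by_cases hik : (i:ℕ) < k₀ <;> by_cases hjk : (j:ℕ) < k₀
    · obtain ⟨_, hfi⟩ := hgA i hik
      obtain ⟨_, hfj⟩ := hgA j hjk
      have hααij : α i = α j := by rw [← hfi, ← hfj, hgij]
      rw [hα] at hααij
      simp only [hik, hjk, dif_pos] at hααij
      have := eA.injective (Subtype.coe_injective hααij)
      rw [Fin.mk_eq_mk] at this
      exact Fin.ext (by omega)
    · exact absurd ((hgA i hik).1) (hgij ▸ (hgB j hjk).1)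
    · exact absurd ((hgA j hjk).1) (hgij ▸ (hgB i hik).1)
    · obtain ⟨_, hfi⟩ := hgB i hik
      obtain ⟨_, hfj⟩ := hgB j hjk
      have hααij : α i = α j := by rw [← hfi, ← hfj, hgij]
      rw [hα] at hααij
      simp only [hik, hjk, dif_neg, not_false_iff] at hααij
      have := eB.injective (Subtype.coe_injective hααij)
      rw [Fin.mk_eq_mk] at this
      exact Fin.ext (by omega)
  set σ : Equiv.Perm (Fin l) :=
    Equiv.ofBijective g (Finite.injective_iff_bijective.mp hginj) with hσ
  refine ⟨v, hv0, hviso, α, σ, k₀, hk₀1, by omega, hstrict, hcrossα, ?_⟩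
  intro i
  have hσi : σ i = g i := rfl
  by_cases hik : (i:ℕ) < k₀
  · obtain ⟨hgiA, hfgi⟩ := hgA i hik
    rw [if_pos hik, hσi, hWA _ hgiA, hfgi]
  · obtain ⟨hgiB, hfgi⟩ := hgB i hik
    rw [if_neg hik, hσi, hWB _ hgiB, hfgi]

end Cls

open Cls in
/-- Classification of disconnected finite unions of pairwise distinct nonempty open sets
of intersection type in `ℝ^{p,q}`, `p, q ≥ 2`: the union is disconnected iff either the
sets are, up to permutation, half-spaces `H_{v,α₁}, …, H_{v,α_{k₀}}` and
`H_{-v,-α_{k₀+1}}, …, H_{-v,-α_l}` with `α₁ > ⋯ > α_{k₀} ≥ α_{k₀+1} > ⋯ > α_l`, or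
`l = 2` and the two sets are `v + U_S` and `v + U_T` for some `v`. -/
theorem disconnected_union_classification (p q : ℕ) (hp : 2 ≤ p) (hq : 2 ≤ q)
    (l : ℕ) (hl : 2 ≤ l) (W : Fin l → Set (Fin (p + q) → ℝ))
    (hdist : Function.Injective W) (hne : ∀ i, (W i).Nonempty)
    (htype : ∀ i, InterType p q (W i)) :
    ¬ IsConnected (⋃ i, W i) ↔
      ((∃ v : Fin (p + q) → ℝ, v ≠ 0 ∧ formB p q v v = 0 ∧
          ∃ α : Fin l → ℝ, ∃ σ : Equiv.Perm (Fin l), ∃ k₀ : ℕ,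
            1 ≤ k₀ ∧ k₀ ≤ l - 1 ∧
            (∀ i j : Fin l, i < j → ((j : ℕ) < k₀ ∨ k₀ ≤ (i : ℕ)) → α j < α i) ∧
            (∀ i j : Fin l, (i : ℕ) < k₀ → k₀ ≤ (j : ℕ) → α j ≤ α i) ∧
            (∀ i : Fin l, W (σ i) =
              if (i : ℕ) < k₀ then {w | formB p q v w > α i}
              else {w | formB p q (-v) w > -(α i)})) ∨
        (l = 2 ∧ ∃ v : Fin (p + q) → ℝ, ∃ i j : Fin l, i ≠ j ∧
          W i = {w | formB p q (w - v) (w - v) > 0} ∧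
          W j = {w | formB p q (w - v) (w - v) < 0})) := by
  constructor
  · intro hdisc
    classical
    set R : Fin l → Fin l → Prop := fun a b => (W a ∩ W b).Nonempty with hR
    have hprecon : ∀ i, IsPreconnected (W i) := by
      intro i
      rcases htype i with ⟨u, h⟩ | ⟨u, h⟩ | ⟨zz, β, _, _, h⟩
      · rw [h]; exact isPreconnected_S hq u
      · rw [h]; exact isPreconnected_T hp u
      · rw [h]; exact isPreconnected_H zz β
    have hnotall : ¬ ∀ i j, Relation.ReflTransGen R i j := by
      intro hall
      apply hdisc
      refine ⟨?_, IsPreconnected.iUnion_of_reflTransGen hprecon hall⟩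
      obtain ⟨x, hx⟩ := hne ⟨0, by omega⟩
      exact ⟨x, Set.mem_iUnion.mpr ⟨_, hx⟩⟩
    push_neg at hnotall
    obtain ⟨i0, j0, hij0⟩ := hnotall
    set A : Set (Fin l) := {k | Relation.ReflTransGen R i0 k} with hA
    have hi0 : i0 ∈ A := Relation.ReflTransGen.refl
    have hj0 : j0 ∉ A := hij0
    have hcross : ∀ a ∈ A, ∀ b, b ∉ A → W a ∩ W b = ∅ := by
      intro a ha b hb
      by_contra h
      exact hb (Relation.ReflTransGen.tail ha (Set.nonempty_iff_ne_empty.mpr h))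
    have hSide : ∀ k : Fin l, ∃ B : Set (Fin l), k ∉ B ∧ B.Nonempty ∧
        (∀ m ∈ B, ∀ m', m' ∉ B → W m ∩ W m' = ∅) := by
      intro k
      by_cases hkA : k ∈ A
      · refine ⟨Aᶜ, by simpa using hkA, ⟨j0, hj0⟩, ?_⟩
        intro m hm m' hm'
        rw [Set.inter_comm]
        exact hcross m' (not_not.mp (by simpa using hm')) m (by simpa using hm)
      · exact ⟨A, hkA, ⟨i0, hi0⟩, fun m hm m' hm' => hcross m hm m' hm'⟩
    by_cases hS : ∃ k u, W k = {w | formB p q (w - u) (w - u) > 0}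
    · right
      obtain ⟨k, u, hWk⟩ := hS
      obtain ⟨B, hkB, hBne, hBcross⟩ := hSide k
      exact helper_ST hp hq hl W hdist htype k u hWk B hkB hBne hBcross
    · by_cases hT : ∃ k u, W k = {w | formB p q (w - u) (w - u) < 0}
      · exfalso
        obtain ⟨k, u, hWk⟩ := hT
        obtain ⟨B, hkB, hBne, hBcross⟩ := hSide k
        obtain ⟨j', hj'B⟩ := hBne
        have hdisj : W j' ∩ W k = ∅ := hBcross j' hj'B k hkB
        rcases htype j' with ⟨w, hWw⟩ | ⟨w, hWw⟩ | ⟨zz, β, hzz, hziso, hWw⟩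
        · exact hS ⟨j', w, hWw⟩
        · obtain ⟨x, hx1, hx2⟩ := meet_TT (by omega) w u
          have : x ∈ W j' ∩ W k := ⟨by rw [hWw]; exact hx1, by rw [hWk]; exact hx2⟩
          rw [hdisj] at this; exact this
        · obtain ⟨x, hx1, hx2⟩ := meet_HT hp zz hzz β u
          have : x ∈ W j' ∩ W k := ⟨by rw [hWw]; exact hx1, by rw [hWk]; exact hx2⟩
          rw [hdisj] at this; exact this
      · left
        have hH : ∀ k, ∃ zz β, zz ≠ 0 ∧ formB p q zz zz = 0 ∧
            W k = {w | formB p q zz w > β} := by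
          intro k
          rcases htype k with ⟨w, hWw⟩ | ⟨w, hWw⟩ | ⟨zz, β, h1, h2, h3⟩
          · exact absurd ⟨k, w, hWw⟩ hS
          · exact absurd ⟨k, w, hWw⟩ hT
          · exact ⟨zz, β, h1, h2, h3⟩
        choose z β hz hziso hWH using hH
        exact helper_H hl W hdist z β hz hziso hWH A i0 j0 hi0 hj0 hcross
  · rintro (⟨v, hv0, hviso, α, σ, k₀, h1, h2, h3, h4, h5⟩ | ⟨hl2, v, i, j, hij, h1, h2⟩)
    · exact backward_case1 hl W hne v α σ k₀ h1 h2 h3 h4 h5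
    · exact backward_case2 hl2 W hne v i j hij h1 h2
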